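/- arXiv:2208.12727 — 3 statements merged into one kernel-verified Lean document; each statement's English description precedes it below -/
import Mathlib

section
/- Let k ≥ 2 be an integer and λ̲ ∈ ℝ_+^k satisfy Assumption (A). If λ̲ is fully critical-subcritical (i.e. λ^{∖i} ≤ 1 for every i∈[k]), then f*_ℓ = 1 if ℓ = 1 and f*_ℓ = 0 for every integer ℓ ≥ 2, where f*_ℓ is the probability that the root of an edge-colored Poisson branching process tree with color intensity vector λ̲ has exactly ℓ friends. -/
open MeasureTheory ProbabilityTheory Filter

namespace CAP

/-- Ulam–Harris labels for the edge-colored branching-process tree: a vertex is a list of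
(color, index-among-siblings-of-that-color) pairs, read from the vertex back to the root. -/
abbrev Vtx (k : ℕ) := List (Fin k × ℕ)

/-- Membership in the branching-process tree determined by the offspring configuration `c`,
where `c v i` is the number of children of `v` attached by an edge of color `i`. -/
def inTree {k : ℕ} (c : Vtx k → Fin k → ℕ) : Vtx k → Prop
  | [] => True
  | q :: v => inTree c v ∧ q.2 < c v q.1

/-- `v` is `i`-avoiding connected to infinity: there is an infinite path of descendants
starting at `v` using no edge of color `i`. -/
def avoidInf {k : ℕ} (c : Vtx k → Fin k → ℕ) (i : Fin k) (v : Vtx k) : Prop :=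
  ∃ f : ℕ → Vtx k, f 0 = v ∧ ∀ m : ℕ,
    inTree c (f (m + 1)) ∧ ∃ q : Fin k × ℕ, q.1 ≠ i ∧ f (m + 1) = q :: f m

/-- The root and the vertex `v` are `i`-avoiding friends: either the (unique) path from the
root to `v` uses no edge of color `i`, or both are `i`-avoiding connected to infinity. -/
def iFriend {k : ℕ} (c : Vtx k → Fin k → ℕ) (i : Fin k) (v : Vtx k) : Prop :=
  (∀ q ∈ v, Prod.fst q ≠ i) ∨ (avoidInf c i ([] : Vtx k) ∧ avoidInf c i v)

/-- The set of (color-avoiding) friends of the root in the branching-process tree. -/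
def friendSet {k : ℕ} (c : Vtx k → Fin k → ℕ) : Set (Vtx k) :=
  {v | inTree c v ∧ ∀ i : Fin k, iFriend c i v}

/-- `X v i` (the numbers of color-`i` children of `v`) form an independent family of
Poisson(`lam i`) random variables: the edge-colored Poisson branching process tree. -/
structure IsECBP {k : ℕ} {Ω : Type*} [MeasurableSpace Ω] (μ : Measure Ω)
    (lam : Fin k → ℝ) (X : Vtx k → Fin k → Ω → ℕ) : Prop where
  isProb : IsProbabilityMeasure μ
  meas : ∀ v i, Measurable (X v i)
  indep : iIndepFun
    (fun p : Vtx k × Fin k => X p.1 p.2) μ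
  poisson : ∀ v i m, μ {ω | X v i ω = m}
    = ENNReal.ofReal (Real.exp (-(lam i)) * (lam i) ^ m / m.factorial)

/-- The `i`-avoiding graph of a colored edge configuration `c` on `Fin n`:
`x` and `y` are adjacent if they are joined by an edge of some color `j ≠ i`. -/
def avoidGraph {k n : ℕ} (c : Fin k → Sym2 (Fin n) → Bool) (i : Fin k) :
    SimpleGraph (Fin n) where
  Adj x y := x ≠ y ∧ ∃ j : Fin k, j ≠ i ∧ c j s(x, y) = true
  symm := ⟨by
    rintro x y ⟨hxy, j, hj, hc⟩
    exact ⟨hxy.symm, j, hj, by rwa [Sym2.eq_swap] at hc⟩⟩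
  loopless := ⟨fun x h => h.1 rfl⟩

/-- The color-avoiding connected component of `v`. -/
def caComp {k n : ℕ} (c : Fin k → Sym2 (Fin n) → Bool) (v : Fin n) : Set (Fin n) :=
  {w | ∀ i : Fin k, (avoidGraph c i).Reachable v w}

/-- The edge-colored Erdős–Rényi multigraph `𝒢_n(V, λ)` on vertex set `Fin n`:
independent colored edge indicators, an edge of color `i` being present with probability
`1 - exp (- lam i / n)`. -/
structure IsECER {k : ℕ} {Ω : Type*} [MeasurableSpace Ω] (μ : Measure Ω) (n : ℕ)
    (lam : Fin k → ℝ) (E : Fin k → Sym2 (Fin n) → Ω → Bool) : Prop where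
  isProb : IsProbabilityMeasure μ
  meas : ∀ i e, Measurable (E i e)
  indep : iIndepFun
    (fun p : Fin k × Sym2 (Fin n) => E p.1 p.2) μ
  prob : ∀ i e, ¬ e.IsDiag →
    μ {ω | E i e ω = true} = ENNReal.ofReal (1 - Real.exp (-(lam i) / n))
  noDiag : ∀ i e, e.IsDiag → ∀ ω, E i e ω = false





/-- the survival-probability recursion sequence -/
noncomputable def seqA (mu : ℝ) : ℕ → ℝ
  | 0 => 1
  | n + 1 => 1 - Real.exp (-(mu * seqA mu n))

lemma seqA_nonneg {mu : ℝ} (hmu : 0 ≤ mu) : ∀ n, 0 ≤ seqA mu n := by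
  intro n
  induction n with
  | zero => norm_num [seqA]
  | succ n ih =>
    have h : Real.exp (-(mu * seqA mu n)) ≤ 1 :=
      Real.exp_le_one_iff.2 (by nlinarith)
    simp only [seqA]; linarith

lemma seqA_le_one {mu : ℝ} : ∀ n, seqA mu n ≤ 1 := by
  intro n
  cases n with
  | zero => norm_num [seqA]
  | succ n =>
    have := Real.exp_pos (-(mu * seqA mu n))
    simp only [seqA]; linarith

lemma seqA_tendsto_zero {mu : ℝ} (h0 : 0 < mu) (h1 : mu ≤ 1) :
    Tendsto (seqA mu) atTop (nhds 0) := by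
  have hnn : ∀ n, 0 ≤ seqA mu n := seqA_nonneg h0.le
  have hstep : ∀ n, seqA mu (n + 1) ≤ seqA mu n := by
    intro n
    induction n with
    | zero => simpa [seqA] using seqA_le_one (mu := mu) 1
    | succ n ih =>
      have hexp : Real.exp (-(mu * seqA mu n)) ≤ Real.exp (-(mu * seqA mu (n + 1))) :=
        Real.exp_le_exp.2 (by nlinarith)
      show 1 - Real.exp (-(mu * seqA mu (n + 1))) ≤ 1 - Real.exp (-(mu * seqA mu n))
      linarith
  have hanti : Antitone (seqA mu) := antitone_nat_of_succ_le hstep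
  have hbdd : BddBelow (Set.range (seqA mu)) := ⟨0, by rintro x ⟨n, rfl⟩; exact hnn n⟩
  have htend : Tendsto (seqA mu) atTop (nhds (⨅ n, seqA mu n)) :=
    tendsto_atTop_ciInf hanti hbdd
  set L := ⨅ n, seqA mu n with hL
  have hL0 : 0 ≤ L := le_ciInf hnn
  have hfix : L = 1 - Real.exp (-(mu * L)) := by
    have h2 : Tendsto (fun n => seqA mu (n + 1)) atTop (nhds L) :=
      htend.comp (tendsto_add_atTop_nat 1)
    have h3 : Tendsto (fun n => 1 - Real.exp (-(mu * seqA mu n))) atTop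
        (nhds (1 - Real.exp (-(mu * L)))) := by
      have hc : Continuous fun x : ℝ => 1 - Real.exp (-(mu * x)) := by continuity
      exact (hc.tendsto L).comp htend
    exact tendsto_nhds_unique h2 (by simpa only [seqA] using h3)
  have hLz : L = 0 := by
    by_contra hne
    have hLpos : 0 < L := lt_of_le_of_ne hL0 (Ne.symm hne)
    have hx : (0:ℝ) < mu * L := mul_pos h0 hLpos
    have hstrict := Real.add_one_lt_exp (x := -(mu * L)) (neg_ne_zero.2 hx.ne')
    nlinarith
  rwa [hLz] at htend



def good {k : ℕ} (i : Fin k) (v : Vtx k) : Prop := ∀ q ∈ v, Prod.fst q ≠ i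

def sub {k : ℕ} (c : Vtx k → Fin k → ℕ) (u : Vtx k) : Vtx k → Prop
  | [] => True
  | q :: w => sub c u w ∧ q.2 < c (w ++ u) q.1

lemma sub_nil_iff {k : ℕ} (c : Vtx k → Fin k → ℕ) (v : Vtx k) :
    sub c ([] : Vtx k) v ↔ inTree c v := by
  induction v with
  | nil => simp [sub, inTree]
  | cons q w ih => simp [sub, inTree, ih]

lemma sub_concat {k : ℕ} (c : Vtx k → Fin k → ℕ) (u w : Vtx k) (q : Fin k × ℕ) :
    sub c u (w ++ [q]) ↔ q.2 < c u q.1 ∧ sub c (q :: u) w := by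
  induction w with
  | nil => simp [sub]
  | cons r w ih =>
    show sub c u (w ++ [q]) ∧ r.2 < c ((w ++ [q]) ++ u) r.1 ↔ _
    rw [ih, List.append_assoc]
    show _ ↔ _ ∧ sub c (q :: u) w ∧ r.2 < c (w ++ (q :: u)) r.1
    simp only [List.singleton_append]
    tauto

lemma good_concat {k : ℕ} (i : Fin k) (w : Vtx k) (q : Fin k × ℕ) :
    good i (w ++ [q]) ↔ good i w ∧ q.1 ≠ i := by
  constructor
  · intro h
    exact ⟨fun q' hq' => h q' (List.mem_append_left _ hq'),
      h q (List.mem_append_right _ (by simp))⟩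
  · rintro ⟨h1, h2⟩ q' hq'
    rcases List.mem_append.1 hq' with h | h
    · exact h1 _ h
    · simp only [List.mem_singleton] at h; subst h; exact h2

lemma append_cons_inj {k : ℕ} {w₁ w₂ u : Vtx k} {q₁ q₂ : Fin k × ℕ}
    (h : w₁ ++ q₁ :: u = w₂ ++ q₂ :: u) : q₁ = q₂ := by
  have h' : (w₁ ++ [q₁]) ++ u = (w₂ ++ [q₂]) ++ u := by
    simpa [List.append_assoc] using h
  have h2 : w₁ ++ [q₁] = w₂ ++ [q₂] := by
    have hlen : (w₁ ++ [q₁]).length = (w₂ ++ [q₂]).length := by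
      have := congrArg List.length h'
      simp only [List.length_append] at this ⊢
      omega
    exact (List.append_inj h' (by omega)).1
  have h3 := congrArg List.getLast? h2
  simpa [List.getLast?_concat] using h3

section Core

variable {k : ℕ} {Ω' : Type*} [MeasurableSpace Ω']

/-- the event that there is an `i`-avoiding path of length `n` in the subtree rooted at `u` -/
def Bset (X : Vtx k → Fin k → Ω' → ℕ) (i : Fin k) (n : ℕ) (u : Vtx k) : Set Ω' :=
  {ω | ∃ v : Vtx k, v.length = n ∧ good i v ∧ sub (fun w j => X w j ω) u v}

lemma Bset_zero (X : Vtx k → Fin k → Ω' → ℕ) (i : Fin k) (u : Vtx k) :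
    Bset X i 0 u = Set.univ := by
  ext ω
  simp only [Set.mem_univ, iff_true, Bset, Set.mem_setOf_eq]
  exact ⟨[], rfl, fun q hq => absurd hq List.not_mem_nil, trivial⟩

def Dset (X : Vtx k → Fin k → Ω' → ℕ) (i j : Fin k) (n : ℕ) (u : Vtx k) : Set Ω' :=
  ⋂ m : ℕ, ({ω | X u j ω ≤ m} ∪ (Bset X i n ((j, m) :: u))ᶜ)

lemma Bset_succ_compl (X : Vtx k → Fin k → Ω' → ℕ) (i : Fin k) (n : ℕ) (u : Vtx k) :
    (Bset X i (n+1) u)ᶜ = ⋂ j ∈ Finset.univ.erase i, Dset X i j n u := by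
  ext ω
  simp only [Set.mem_compl_iff, Set.mem_iInter, Dset, Set.mem_union, Set.mem_setOf_eq,
    Finset.mem_erase, Finset.mem_univ, and_true]
  constructor
  · intro h j hj m
    by_cases hle : X u j ω ≤ m
    · exact Or.inl hle
    · refine Or.inr fun hB => h ?_
      obtain ⟨w, hwlen, hwgood, hwsub⟩ := hB
      refine ⟨w ++ [(j, m)], by simp [hwlen], ?_, ?_⟩
      · exact (good_concat i w (j, m)).2 ⟨hwgood, hj⟩
      · exact (sub_concat _ u w (j, m)).2 ⟨lt_of_not_ge hle, hwsub⟩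
  · rintro h ⟨v, hvlen, hvgood, hvsub⟩
    have hvne : v ≠ [] := by intro h'; subst h'; simp at hvlen
    obtain ⟨w, q, rfl⟩ : ∃ w q, v = w ++ [q] :=
      ⟨v.dropLast, v.getLast hvne, (List.dropLast_append_getLast hvne).symm⟩
    rw [good_concat] at hvgood
    rw [sub_concat] at hvsub
    rcases h q.1 hvgood.2 q.2 with hle | hnB
    · exact absurd hvsub.1 (not_lt.2 hle)
    · exact hnB ⟨w, by simpa using hvlen, hvgood.1, hvsub.2⟩

/-- comap σ-algebra of a single offspring variable -/
def cmp (X : Vtx k → Fin k → Ω' → ℕ) (p : Vtx k × Fin k) : MeasurableSpace Ω' :=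
  MeasurableSpace.comap (fun ω => X p.1 p.2 ω) inferInstance

lemma measurableSet_cmp (X : Vtx k → Fin k → Ω' → ℕ) (p : Vtx k × Fin k) (s : Set ℕ) :
    MeasurableSet[cmp X p] ((fun ω => X p.1 p.2 ω) ⁻¹' s) :=
  ⟨s, trivial, rfl⟩

lemma measurableSet_sub (X : Vtx k → Fin k → Ω' → ℕ) {M : MeasurableSpace Ω'} (u : Vtx k)
    (hM : ∀ (w : Vtx k) (j : Fin k) (s : Set ℕ),
      MeasurableSet[M] ((fun ω => X (w ++ u) j ω) ⁻¹' s)) :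
    ∀ v : Vtx k, MeasurableSet[M] {ω | sub (fun w j => X w j ω) u v} := by
  intro v
  induction v with
  | nil =>
    have : {ω : Ω' | sub (fun w j => X w j ω) u ([] : Vtx k)} = Set.univ := by
      ext ω; simp [sub]
    rw [this]; exact MeasurableSet.univ
  | cons q w ih =>
    have : {ω : Ω' | sub (fun w' j => X w' j ω) u (q :: w)}
        = {ω : Ω' | sub (fun w' j => X w' j ω) u w}
          ∩ ((fun ω => X (w ++ u) q.1 ω) ⁻¹' {t | q.2 < t}) := rfl
    rw [this]
    exact ih.inter (hM w q.1 _)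

lemma measurableSet_Bset (X : Vtx k → Fin k → Ω' → ℕ) {M : MeasurableSpace Ω'}
    (i : Fin k) (n : ℕ) (u : Vtx k)
    (hM : ∀ (w : Vtx k) (j : Fin k) (s : Set ℕ),
      MeasurableSet[M] ((fun ω => X (w ++ u) j ω) ⁻¹' s)) :
    MeasurableSet[M] (Bset X i n u) := by
  have hrw : Bset X i n u = ⋃ v : Vtx k, ⋃ (_ : v.length = n ∧ good i v),
      {ω | sub (fun w j => X w j ω) u v} := by
    ext ω
    simp only [Bset, Set.mem_setOf_eq, Set.mem_iUnion]
    constructor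
    · rintro ⟨v, h1, h2, h3⟩; exact ⟨v, ⟨h1, h2⟩, h3⟩
    · rintro ⟨v, ⟨h1, h2⟩, h3⟩; exact ⟨v, h1, h2, h3⟩
  rw [hrw]
  exact MeasurableSet.iUnion fun v => MeasurableSet.iUnion fun _ =>
    measurableSet_sub X u hM v

lemma measurableSet_Bset_ambient {lam : Fin k → ℝ} {μ' : Measure Ω'}
    {X : Vtx k → Fin k → Ω' → ℕ} (hX : IsECBP μ' lam X) (i : Fin k) (n : ℕ) (u : Vtx k) :
    MeasurableSet (Bset X i n u) :=
  measurableSet_Bset X i n u fun w j s => (hX.meas (w ++ u) j) trivial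

/-- grouping lemma: product rule for finitely many events measurable w.r.t.
σ-algebras generated by disjoint groups of offspring variables -/
lemma meas_biInter_groups {lam : Fin k → ℝ} {μ' : Measure Ω'}
    {X : Vtx k → Fin k → Ω' → ℕ} (hX : IsECBP μ' lam X)
    {T : Type*} (s : Finset T) (S : T → Set (Vtx k × Fin k))
    (hdisj : ∀ t₁ ∈ s, ∀ t₂ ∈ s, t₁ ≠ t₂ → Disjoint (S t₁) (S t₂))
    (A : T → Set Ω')
    (hA : ∀ t ∈ s, MeasurableSet[⨆ p ∈ S t, cmp X p] (A t)) :
    μ' (⋂ t ∈ s, A t) = ∏ t ∈ s, μ' (A t) := by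
  classical
  haveI := hX.isProb
  induction s using Finset.induction_on with
  | empty => simp
  | insert _ _ ha ih =>
    rename_i t₀ s
    rw [Finset.set_biInter_insert, Finset.prod_insert ha]
    have h_le : ∀ p : Vtx k × Fin k, cmp X p ≤ ‹MeasurableSpace Ω'› :=
      fun p => (hX.meas p.1 p.2).comap_le
    have hindep : iIndep (fun p => cmp X p) μ' := hX.indep.iIndep
    have hd : Disjoint (S t₀) (⋃ t ∈ s, S t) := by
      rw [Set.disjoint_iUnion₂_right]
      intro t ht
      exact hdisj t₀ (Finset.mem_insert_self _ _) t (Finset.mem_insert_of_mem ht)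
        (fun h => ha (h ▸ ht))
    have hInd : Indep (⨆ p ∈ S t₀, cmp X p) (⨆ p ∈ ⋃ t ∈ s, S t, cmp X p) μ' :=
      indep_iSup_of_disjoint h_le hindep hd
    have hmeas2 : MeasurableSet[⨆ p ∈ ⋃ t ∈ s, S t, cmp X p] (⋂ t ∈ s, A t) := by
      refine MeasurableSet.biInter s.countable_toSet fun t ht => ?_
      have hsub : (⨆ p ∈ S t, cmp X p) ≤ ⨆ p ∈ ⋃ t' ∈ s, S t', cmp X p := by
        refine iSup₂_le fun p hp => ?_
        exact le_iSup₂ (f := fun (p : Vtx k × Fin k) (_ : p ∈ ⋃ t' ∈ s, S t') => cmp X p)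
          p (Set.mem_biUnion ht hp)
      exact hsub _ (hA t (Finset.mem_insert_of_mem ht))
    rw [(Indep_iff _ _ _).1 hInd _ _ (hA t₀ (Finset.mem_insert_self _ _)) hmeas2,
      ih (fun t₁ h₁ t₂ h₂ h => hdisj t₁ (Finset.mem_insert_of_mem h₁)
        t₂ (Finset.mem_insert_of_mem h₂) h)
        (fun t ht => hA t (Finset.mem_insert_of_mem ht))]

end Core

lemma tsum_pois {l t : ℝ} :
    ∑' m : ℕ, Real.exp (-l) * l ^ m / (m.factorial : ℝ) * t ^ m
      = Real.exp (-(l * (1 - t))) := by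
  have h1 : ∀ m : ℕ, Real.exp (-l) * l ^ m / (m.factorial : ℝ) * t ^ m
      = Real.exp (-l) * ((l * t) ^ m / (m.factorial : ℝ)) := by
    intro m; rw [mul_pow]; ring
  rw [tsum_congr h1, tsum_mul_left]
  have h2 : ∑' m : ℕ, (l * t) ^ m / (m.factorial : ℝ) = Real.exp (l * t) := by
    rw [Real.exp_eq_exp_ℝ, NormedSpace.exp_eq_tsum_div]
  rw [h2, ← Real.exp_add]
  ring_nf

lemma summable_pois (l t : ℝ) :
    Summable (fun m : ℕ => Real.exp (-l) * l ^ m / (m.factorial : ℝ) * t ^ m) := by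
  have h1 : ∀ m : ℕ, Real.exp (-l) * l ^ m / (m.factorial : ℝ) * t ^ m
      = Real.exp (-l) * ((l * t) ^ m / (m.factorial : ℝ)) := by
    intro m; rw [mul_pow]; ring
  rw [funext h1]
  exact (Real.summable_pow_div_factorial (l * t)).mul_left _

section Core2

variable {k : ℕ} {Ω' : Type*} [MeasurableSpace Ω']

lemma Dset_measure {lam : Fin k → ℝ} {μ' : Measure Ω'} {X : Vtx k → Fin k → Ω' → ℕ}
    (hX : IsECBP μ' lam X) (i j : Fin k) (n : ℕ) (u : Vtx k) {a : ℝ}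
    (ha0 : 0 ≤ a) (ha1 : a ≤ 1) (hj : 0 ≤ lam j)
    (IH : ∀ u' : Vtx k, μ' (Bset X i n u') = ENNReal.ofReal a) :
    μ' (Dset X i j n u) = ENNReal.ofReal (Real.exp (-(lam j * a))) := by
  classical
  haveI := hX.isProb
  set piece : ℕ → Set Ω' := fun m =>
    ((fun ω => X u j ω) ⁻¹' {m}) ∩ ⋂ m' ∈ Finset.range m, (Bset X i n ((j, m') :: u))ᶜ
    with hpiece_def
  have hpart : Dset X i j n u = ⋃ m : ℕ, piece m := by
    ext ω
    simp only [Dset, Set.mem_iInter, Set.mem_union, Set.mem_setOf_eq, Set.mem_iUnion,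
      hpiece_def, Set.mem_inter_iff, Set.mem_preimage, Set.mem_singleton_iff,
      Set.mem_compl_iff, Finset.mem_range]
    constructor
    · intro h
      refine ⟨X u j ω, rfl, fun m' hm' => ?_⟩
      rcases h m' with h1 | h2
      · omega
      · exact h2
    · rintro ⟨m, hm, h⟩ m'
      by_cases hle : X u j ω ≤ m'
      · exact Or.inl hle
      · exact Or.inr (h m' (by omega))
  have hBmeas : ∀ u' : Vtx k, MeasurableSet (Bset X i n u') :=
    measurableSet_Bset_ambient hX i n
  have hBc : ∀ u' : Vtx k, μ' ((Bset X i n u')ᶜ) = ENNReal.ofReal (1 - a) := by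
    intro u'
    rw [measure_compl (hBmeas u') (measure_ne_top _ _), measure_univ, IH u',
      ← ENNReal.ofReal_one, ← ENNReal.ofReal_sub _ ha0]
  have hpiece_meas : ∀ m : ℕ, MeasurableSet (piece m) := by
    intro m
    exact ((hX.meas u j) trivial).inter
      (MeasurableSet.biInter (Set.to_countable _) fun m' _ => (hBmeas _).compl)
  have hdisj_piece : Pairwise (Function.onFun Disjoint piece) := by
    intro m₁ m₂ hne
    rw [Function.onFun, Set.disjoint_left]
    rintro ω ⟨h1, _⟩ ⟨h2, _⟩
    rw [Set.mem_preimage, Set.mem_singleton_iff] at h1 h2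
    exact hne (h1 ▸ h2)
  have hpiece_val : ∀ m : ℕ, μ' (piece m)
      = ENNReal.ofReal (Real.exp (-(lam j)) * lam j ^ m / (m.factorial : ℝ))
        * (ENNReal.ofReal (1 - a)) ^ m := by
    intro m
    set A : ℕ → Set Ω' := fun t =>
      Nat.casesOn t ((fun ω => X u j ω) ⁻¹' {m}) (fun m' => (Bset X i n ((j, m') :: u))ᶜ)
      with hA_def
    set S : ℕ → Set (Vtx k × Fin k) := fun t =>
      Nat.casesOn t ({((u, j) : Vtx k × Fin k)} : Set (Vtx k × Fin k))
        (fun m' => {p | ∃ w : Vtx k, p.1 = w ++ (j, m') :: u}) with hS_def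
    have hrw : piece m = ⋂ t ∈ Finset.range (m + 1), A t := by
      ext ω
      simp only [hpiece_def, Set.mem_inter_iff, Set.mem_iInter, Finset.mem_range]
      constructor
      · rintro ⟨h0, h1⟩ t ht
        cases t with
        | zero => exact h0
        | succ m' => exact h1 m' (by omega)
      · intro h
        exact ⟨h 0 (by omega), fun m' hm' => h (m' + 1) (by omega)⟩
    have hdisj : ∀ t₁ ∈ Finset.range (m + 1), ∀ t₂ ∈ Finset.range (m + 1), t₁ ≠ t₂ →
        Disjoint (S t₁) (S t₂) := by
      have key : ∀ m' : ℕ, Disjoint (S 0) (S (m' + 1)) := by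
        intro m'
        rw [Set.disjoint_left]
        rintro p hp1 ⟨w, hw⟩
        rw [hS_def] at hp1
        simp only [Set.mem_singleton_iff] at hp1
        subst hp1
        have := congrArg List.length hw
        simp at this
        omega
      have key2 : ∀ m₁ m₂ : ℕ, m₁ ≠ m₂ → Disjoint (S (m₁ + 1)) (S (m₂ + 1)) := by
        intro m₁ m₂ hne
        rw [Set.disjoint_left]
        rintro p ⟨w₁, hw₁⟩ ⟨w₂, hw₂⟩
        have := append_cons_inj (hw₁.symm.trans hw₂)
        simp only [Prod.mk.injEq] at this
        exact hne this.2
      intro t₁ _ t₂ _ hne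
      cases t₁ with
      | zero =>
        cases t₂ with
        | zero => exact absurd rfl hne
        | succ m₂ => exact key m₂
      | succ m₁ =>
        cases t₂ with
        | zero => exact (key m₁).symm
        | succ m₂ => exact key2 m₁ m₂ (by omega)
    have hA : ∀ t ∈ Finset.range (m + 1), MeasurableSet[⨆ p ∈ S t, cmp X p] (A t) := by
      intro t _
      cases t with
      | zero =>
        have hle : cmp X (u, j) ≤ ⨆ p ∈ S 0, cmp X p :=
          le_iSup₂ (f := fun (p : Vtx k × Fin k) (_ : p ∈ S 0) => cmp X p) (u, j) rfl
        exact hle _ (measurableSet_cmp X (u, j) {m})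
      | succ m' =>
        refine MeasurableSet.compl ?_
        refine measurableSet_Bset X i n ((j, m') :: u) fun w j' s => ?_
        have hmem : ((w ++ (j, m') :: u, j') : Vtx k × Fin k) ∈ S (m' + 1) := ⟨w, rfl⟩
        have hle : cmp X (w ++ (j, m') :: u, j') ≤ ⨆ p ∈ S (m' + 1), cmp X p :=
          le_iSup₂ (f := fun (p : Vtx k × Fin k) (_ : p ∈ S (m' + 1)) => cmp X p)
            (w ++ (j, m') :: u, j') hmem
        exact hle _ (measurableSet_cmp X _ s)
    rw [hrw, meas_biInter_groups hX _ S hdisj A hA, Finset.prod_range_succ']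
    have hA0 : μ' (A 0) = ENNReal.ofReal (Real.exp (-(lam j)) * lam j ^ m / (m.factorial : ℝ)) := by
      have : A 0 = {ω | X u j ω = m} := by ext ω; simp [hA_def]
      rw [this, hX.poisson u j m]
    have hAs : ∀ t ∈ Finset.range m, μ' (A (t + 1)) = ENNReal.ofReal (1 - a) :=
      fun t _ => hBc _
    rw [Finset.prod_congr rfl hAs, hA0, Finset.prod_const, Finset.card_range, mul_comm]
  rw [hpart, measure_iUnion hdisj_piece hpiece_meas, tsum_congr hpiece_val]
  have hterm : ∀ m : ℕ,
      ENNReal.ofReal (Real.exp (-(lam j)) * lam j ^ m / (m.factorial : ℝ))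
        * (ENNReal.ofReal (1 - a)) ^ m
      = ENNReal.ofReal (Real.exp (-(lam j)) * lam j ^ m / (m.factorial : ℝ) * (1 - a) ^ m) := by
    intro m
    have h1a : (0:ℝ) ≤ 1 - a := by linarith
    rw [← ENNReal.ofReal_pow h1a, ← ENNReal.ofReal_mul
      (div_nonneg (mul_nonneg (Real.exp_pos _).le (pow_nonneg hj m)) (Nat.cast_nonneg _))]
  have h1a : (0:ℝ) ≤ 1 - a := by linarith
  rw [tsum_congr hterm, ← ENNReal.ofReal_tsum_of_nonneg (fun m =>
      mul_nonneg (div_nonneg (mul_nonneg (Real.exp_pos _).le (pow_nonneg hj m))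
        (Nat.cast_nonneg _)) (pow_nonneg h1a m))
    (summable_pois (lam j) (1 - a)), tsum_pois]
  congr 1
  ring_nf

def Svar {k : ℕ} (j : Fin k) (u : Vtx k) : Set (Vtx k × Fin k) :=
  {p | p = (u, j) ∨ ∃ w m, p.1 = w ++ (j, m) :: u}

lemma Bset_measure {lam : Fin k → ℝ} {μ' : Measure Ω'} {X : Vtx k → Fin k → Ω' → ℕ}
    (hX : IsECBP μ' lam X) (hpos : ∀ i, 0 ≤ lam i) (i : Fin k) :
    ∀ (n : ℕ) (u : Vtx k), μ' (Bset X i n u)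
      = ENNReal.ofReal (seqA (∑ j ∈ Finset.univ.erase i, lam j) n) := by
  classical
  haveI := hX.isProb
  intro n
  induction n with
  | zero =>
    intro u
    rw [Bset_zero]
    simp [seqA]
  | succ n IH =>
    intro u
    set mu := ∑ j ∈ Finset.univ.erase i, lam j with hmu
    have hmu0 : 0 ≤ mu := Finset.sum_nonneg fun j _ => hpos j
    set a := seqA mu n with ha
    have ha0 : 0 ≤ a := seqA_nonneg hmu0 n
    have ha1 : a ≤ 1 := seqA_le_one n
    have hdisj : ∀ j₁ ∈ Finset.univ.erase i, ∀ j₂ ∈ Finset.univ.erase i, j₁ ≠ j₂ →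
        Disjoint (Svar j₁ u) (Svar j₂ u) := by
      intro j₁ _ j₂ _ hne
      rw [Set.disjoint_left]
      rintro p (hp₁ | ⟨w₁, m₁, hw₁⟩) (hp₂ | ⟨w₂, m₂, hw₂⟩)
      · rw [hp₁] at hp₂
        simp only [Prod.mk.injEq] at hp₂
        exact hne hp₂.2
      · rw [hp₁] at hw₂
        have := congrArg List.length hw₂
        simp at this
        omega
      · rw [hp₂] at hw₁
        have := congrArg List.length hw₁
        simp at this
        omega
      · have := append_cons_inj (hw₁.symm.trans hw₂)
        simp only [Prod.mk.injEq] at this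
        exact hne this.1
    have hA : ∀ j ∈ Finset.univ.erase i,
        MeasurableSet[⨆ p ∈ Svar j u, cmp X p] (Dset X i j n u) := by
      intro j _
      refine MeasurableSet.iInter fun m => MeasurableSet.union ?_ (MeasurableSet.compl ?_)
      · have hle : cmp X (u, j) ≤ ⨆ p ∈ Svar j u, cmp X p :=
          le_iSup₂ (f := fun (p : Vtx k × Fin k) (_ : p ∈ Svar j u) => cmp X p) (u, j)
            (Or.inl rfl)
        have hrw : {ω : Ω' | X u j ω ≤ m} = (fun ω => X u j ω) ⁻¹' {t | t ≤ m} := rfl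
        rw [hrw]
        exact hle _ (measurableSet_cmp X (u, j) _)
      · refine measurableSet_Bset X i n ((j, m) :: u) fun w j' s => ?_
        have hle : cmp X (w ++ (j, m) :: u, j') ≤ ⨆ p ∈ Svar j u, cmp X p :=
          le_iSup₂ (f := fun (p : Vtx k × Fin k) (_ : p ∈ Svar j u) => cmp X p)
            (w ++ (j, m) :: u, j') (Or.inr ⟨w, m, rfl⟩)
        exact hle _ (measurableSet_cmp X _ s)
    have hcompl : μ' ((Bset X i (n + 1) u)ᶜ) = ENNReal.ofReal (Real.exp (-(mu * a))) := by
      rw [Bset_succ_compl, meas_biInter_groups hX _ (fun j => Svar j u) hdisj _ hA]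
      have hval : ∀ j ∈ Finset.univ.erase i,
          μ' (Dset X i j n u) = ENNReal.ofReal (Real.exp (-(lam j * a))) :=
        fun j _ => Dset_measure hX i j n u ha0 ha1 (hpos j) IH
      rw [Finset.prod_congr rfl hval,
        ← ENNReal.ofReal_prod_of_nonneg (fun j _ => (Real.exp_pos _).le), ← Real.exp_sum]
      congr 2
      rw [hmu, Finset.sum_neg_distrib, Finset.sum_mul]
    have h1 : μ' (Bset X i (n + 1) u) = 1 - μ' ((Bset X i (n + 1) u)ᶜ) := by
      rw [prob_compl_eq_one_sub (measurableSet_Bset_ambient hX i (n + 1) u),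
        ENNReal.sub_sub_cancel ENNReal.one_ne_top prob_le_one]
    rw [h1, hcompl, ← ENNReal.ofReal_one, ← ENNReal.ofReal_sub _ (Real.exp_pos _).le]
    simp only [seqA, ← ha]

end Core2


section Glue
variable {k : ℕ} {Ω' : Type*} [MeasurableSpace Ω']

lemma avoidInf_mem_Bset {X : Vtx k → Fin k → Ω' → ℕ} {i : Fin k} {ω : Ω'}
    (h : avoidInf (fun v j => X v j ω) i ([] : Vtx k)) (n : ℕ) : ω ∈ Bset X i n ([] : Vtx k) := by
  obtain ⟨f, hf0, hf⟩ := h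
  have key : ∀ m, (f m).length = m ∧ good i (f m) ∧ inTree (fun v j => X v j ω) (f m) := by
    intro m
    induction m with
    | zero =>
      rw [hf0]
      exact ⟨rfl, fun q hq => absurd hq List.not_mem_nil, trivial⟩
    | succ m ih =>
      obtain ⟨hin, q, hq, hfq⟩ := hf m
      rw [hfq]
      refine ⟨by simp [ih.1], ?_, by rw [← hfq]; exact hin⟩
      intro q' hq'
      rcases List.mem_cons.1 hq' with rfl | h'
      · exact hq
      · exact ih.2.1 q' h'
  exact ⟨f n, (key n).1, (key n).2.1, (sub_nil_iff _ (f n)).2 (key n).2.2⟩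

lemma measure_avoidInf_zero {μ' : Measure Ω'} {lam : Fin k → ℝ}
    {X : Vtx k → Fin k → Ω' → ℕ} (hX : IsECBP μ' lam X) (hpos : ∀ i, 0 < lam i) (hk : 2 ≤ k)
    (hcrit : ∀ i : Fin k, ∑ j ∈ Finset.univ.erase i, lam j ≤ 1) (i : Fin k) :
    μ' {ω | avoidInf (fun v j => X v j ω) i ([] : Vtx k)} = 0 := by
  set mu := ∑ j ∈ Finset.univ.erase i, lam j with hmu
  have hne : (Finset.univ.erase i).Nonempty := by
    rw [← Finset.card_pos, Finset.card_erase_of_mem (Finset.mem_univ i), Finset.card_univ,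
      Fintype.card_fin]
    omega
  have hmu0 : 0 < mu := Finset.sum_pos (fun j _ => hpos j) hne
  have hle : ∀ n, μ' {ω | avoidInf (fun v j => X v j ω) i ([] : Vtx k)}
      ≤ ENNReal.ofReal (seqA mu n) := by
    intro n
    rw [← Bset_measure hX (fun j => (hpos j).le) i n ([] : Vtx k)]
    exact measure_mono fun ω h => avoidInf_mem_Bset h n
  have htd : Tendsto (fun n => ENNReal.ofReal (seqA mu n)) atTop (nhds 0) := by
    have := ENNReal.tendsto_ofReal (seqA_tendsto_zero hmu0 (hcrit i))
    simpa using this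
  exact le_antisymm (ge_of_tendsto' htd hle) zero_le

lemma friendSet_eq_singleton (c : Vtx k → Fin k → ℕ)
    (h : ∀ i : Fin k, ¬ avoidInf c i ([] : Vtx k)) :
    friendSet c = {([] : Vtx k)} := by
  ext v
  simp only [friendSet, Set.mem_setOf_eq, Set.mem_singleton_iff]
  constructor
  · rintro ⟨hin, hfr⟩
    cases v with
    | nil => rfl
    | cons q w =>
      rcases hfr q.1 with hl | hr
      · exact absurd rfl (hl q List.mem_cons_self)
      · exact absurd hr.1 (h q.1)
  · rintro rfl
    exact ⟨trivial, fun i => Or.inl fun q hq => absurd hq List.not_mem_nil⟩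

end Glue

/-- Under Assumption (A), if `λ` is fully critical-subcritical
(`λ^{∖i} ≤ 1` for every color `i`), then `f*_1 = 1` and `f*_ℓ = 0` for every `ℓ ≥ 2`,
where `f*_ℓ` is the probability that the root of the edge-colored Poisson branching process
tree with color intensity vector `λ` has exactly `ℓ` friends. -/
theorem fstar_of_fullyCriticalSubcritical
    {k : ℕ} (hk : 2 ≤ k) (lam : Fin k → ℝ) (hpos : ∀ i, 0 < lam i)
    (hA : ∀ I : Finset (Fin k), I.card ≤ k - 2 → ∑ i ∈ I, lam i < 1)
    (hcrit : ∀ i : Fin k, ∑ j ∈ Finset.univ.erase i, lam j ≤ 1)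
    {Ω' : Type*} [MeasurableSpace Ω'] (μ' : Measure Ω')
    (X : Vtx k → Fin k → Ω' → ℕ) (hX : IsECBP μ' lam X) :
    μ' {ω' : Ω' | (friendSet (fun v i => X v i ω')).Finite ∧
        (friendSet (fun v i => X v i ω')).ncard = 1} = 1 ∧
    ∀ ℓ : ℕ, 2 ≤ ℓ →
      μ' {ω' : Ω' | (friendSet (fun v i => X v i ω')).Finite ∧
          (friendSet (fun v i => X v i ω')).ncard = ℓ} = 0 := by
  classical
  haveI := hX.isProb
  set N : Set Ω' := ⋃ i : Fin k, {ω | avoidInf (fun v j => X v j ω) i ([] : Vtx k)} with hN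
  have hN0 : μ' N = 0 := by
    refine le_antisymm ?_ zero_le
    refine (measure_iUnion_le _).trans ?_
    have : ∀ i : Fin k, μ' {ω | avoidInf (fun v j => X v j ω) i ([] : Vtx k)} = 0 :=
      measure_avoidInf_zero hX hpos hk hcrit
    simp [this]
  have hNc : ∀ ω ∉ N, (friendSet (fun v i => X v i ω)).Finite ∧
      (friendSet (fun v i => X v i ω)).ncard = 1 := by
    intro ω hω
    have heq : friendSet (fun v i => X v i ω) = {([] : Vtx k)} := by
      refine friendSet_eq_singleton _ fun i hi => hω ?_
      exact Set.mem_iUnion.2 ⟨i, hi⟩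
    rw [heq]
    exact ⟨Set.finite_singleton _, Set.ncard_singleton _⟩
  have h2 : (1 : ENNReal) ≤ μ' Nᶜ := by
    have hu := measure_union_le (μ := μ') N Nᶜ
    rw [Set.union_compl_self, measure_univ, hN0, zero_add] at hu
    exact hu
  constructor
  · refine le_antisymm prob_le_one (h2.trans (measure_mono fun ω hω => hNc ω hω))
  · intro ℓ hℓ
    refine le_antisymm ?_ zero_le
    rw [← hN0]
    refine measure_mono fun ω hω => ?_
    by_contra hc
    have h1 := (hNc ω hc).2
    rw [hω.2] at h1
    omega


end CAP
end

section
/- Let k ≥ 2 be an integer and λ̲ ∈ ℝ_+^k satisfy Assumption (A), and let G_∞(r) be an edge-colored Poisson branching process tree with color intensity vector λ̲. Then ρ(r), the number of vertices reachable from the root r by paths using at most k−2 distinct edge colors, is almost surely finite. -/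
open MeasureTheory ProbabilityTheory Filter
open scoped ENNReal NNReal

namespace CAP

section AuxProof
variable {k : ℕ}
def pairs : Vtx k → Finset (Vtx k × Fin k)
  | [] => ∅
  | q :: v => insert (v, q.1) (pairs v)
lemma length_lt_of_mem_pairs : ∀ {v : Vtx k} {p : Vtx k × Fin k},
    p ∈ pairs v → p.1.length < v.length
  | [], p, hp => by simp [pairs] at hp
  | q :: v, p, hp => by
    simp only [pairs, Finset.mem_insert] at hp
    rcases hp with h | h
    · subst h; simp
    · exact (length_lt_of_mem_pairs h).trans (by simp)
lemma inTree_congr {c c' : Vtx k → Fin k → ℕ} : ∀ {v : Vtx k},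
    (∀ p ∈ pairs v, c p.1 p.2 = c' p.1 p.2) → (inTree c v ↔ inTree c' v)
  | [], _ => Iff.rfl
  | q :: v, h => by
    have h1 : c v q.1 = c' v q.1 := h (v, q.1) (by simp [pairs])
    have h2 := inTree_congr (c := c) (c' := c') (v := v)
      (fun p hp => h p (by simp [pairs, hp]))
    show inTree c v ∧ q.2 < c v q.1 ↔ inTree c' v ∧ q.2 < c' v q.1
    rw [h1, h2]

variable {Ω' : Type*} [MeasurableSpace Ω'] {μ' : Measure Ω'}
  {lam : Fin k → ℝ} {X : Vtx k → Fin k → Ω' → ℕ}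

lemma measure_inTree_cons (hX : IsECBP μ' lam X) (q : Fin k × ℕ) (v : Vtx k) :
    μ' {ω | inTree (fun u i => X u i ω) (q :: v)} =
      μ' {ω | inTree (fun u i => X u i ω) v} * μ' {ω | q.2 < X v q.1 ω} := by
  classical
  set S : Finset (Vtx k × Fin k) := pairs v with hS
  set T : Finset (Vtx k × Fin k) := {(v, q.1)} with hT
  have hmemT : ((v, q.1) : Vtx k × Fin k) ∈ T := by simp [hT]
  have hdisj : Disjoint S T := by
    simp only [hT, Finset.disjoint_singleton_right]
    intro h
    exact absurd (length_lt_of_mem_pairs h) (lt_irrefl _)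
  have hindep := hX.indep.indepFun_finset S T hdisj (fun p => hX.meas p.1 p.2)
  set A : Set ((p : S) → ℕ) :=
    {g | inTree (fun u i => if h : (u, i) ∈ S then g ⟨(u, i), h⟩ else 0) v} with hA
  set B : Set ((p : T) → ℕ) := {g | q.2 < g ⟨(v, q.1), hmemT⟩} with hB
  have hAm : MeasurableSet A := (Set.to_countable A).measurableSet
  have hBm : MeasurableSet B := (Set.to_countable B).measurableSet
  have preA : (fun ω (p : S) => X (p : Vtx k × Fin k).1 (p : Vtx k × Fin k).2 ω) ⁻¹' A
      = {ω | inTree (fun u i => X u i ω) v} := by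
    ext ω
    simp only [Set.mem_preimage, hA, Set.mem_setOf_eq]
    exact inTree_congr (fun p hp => by simp [dif_pos hp, hS])
  have preB : (fun ω (p : T) => X (p : Vtx k × Fin k).1 (p : Vtx k × Fin k).2 ω) ⁻¹' B
      = {ω | q.2 < X v q.1 ω} := rfl
  have key := hindep.measure_inter_preimage_eq_mul A B hAm hBm
  rw [preA, preB] at key
  have : {ω | inTree (fun u i => X u i ω) (q :: v)}
      = {ω | inTree (fun u i => X u i ω) v} ∩ {ω | q.2 < X v q.1 ω} := rfl
  rw [this, key]

lemma tsum_pmf_eq_one (hX : IsECBP μ' lam X) (v : Vtx k) (i : Fin k) :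
    ∑' m : ℕ, μ' {ω | X v i ω = m} = 1 := by
  have hd : Pairwise (Function.onFun Disjoint fun m : ℕ => {ω | X v i ω = m}) := by
    intro m n hmn
    simp only [Function.onFun, Set.disjoint_left]
    rintro ω h1 h2
    exact hmn (h1.symm.trans h2)
  have := hX.isProb
  rw [← measure_iUnion hd (fun m => hX.meas v i (measurableSet_singleton m))]
  have : (⋃ m : ℕ, {ω | X v i ω = m}) = Set.univ := by
    ext ω; simp
  rw [this, measure_univ]

lemma measure_tail (hX : IsECBP μ' lam X) (v : Vtx k) (i : Fin k) (m : ℕ) :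
    μ' {ω | m < X v i ω} = ∑' j : ℕ, if m < j then μ' {ω | X v i ω = j} else 0 := by
  classical
  have hd : Pairwise (Function.onFun Disjoint
      fun j : ℕ => {ω | X v i ω = j ∧ m < j}) := by
    intro a b hab
    simp only [Function.onFun, Set.disjoint_left]
    rintro ω ⟨h1, _⟩ ⟨h2, _⟩
    exact hab (h1.symm.trans h2)
  have hmeas : ∀ j : ℕ, MeasurableSet {ω | X v i ω = j ∧ m < j} := fun j =>
    hX.meas v i ((Set.to_countable {x : ℕ | x = j ∧ m < j}).measurableSet)
  have hcover : {ω | m < X v i ω} = ⋃ j : ℕ, {ω | X v i ω = j ∧ m < j} := by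
    ext ω; simp only [Set.mem_setOf_eq, Set.mem_iUnion]
    constructor
    · intro h; exact ⟨X v i ω, rfl, h⟩
    · rintro ⟨j, rfl, h⟩; exact h
  rw [hcover, measure_iUnion hd hmeas]
  congr 1; ext j
  by_cases h : m < j
  · rw [if_pos h]; congr 1; ext ω; simp [h]
  · rw [if_neg h]
    have : {ω | X v i ω = j ∧ m < j} = ∅ := by ext ω; simp [h]
    simp [this]

lemma tsum_ite_lt (j : ℕ) (c : ℝ≥0∞) :
    ∑' m : ℕ, (if m < j then c else 0) = j * c := by
  classical
  rw [tsum_eq_sum (s := Finset.range j) (fun m hm => by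
    simp only [Finset.mem_range] at hm; simp [hm])]
  rw [Finset.sum_congr rfl (fun m hm => if_pos (Finset.mem_range.mp hm))]
  simp [mul_comm]

lemma tsum_tail (hX : IsECBP μ' lam X) (hpos : ∀ i, 0 < lam i) (v : Vtx k) (i : Fin k) :
    ∑' m : ℕ, μ' {ω | m < X v i ω} = ENNReal.ofReal (lam i) := by
  classical
  have h1 : ∑' m : ℕ, μ' {ω | m < X v i ω}
      = ∑' j : ℕ, (j : ℝ≥0∞) * μ' {ω | X v i ω = j} := by
    calc ∑' m : ℕ, μ' {ω | m < X v i ω}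
        = ∑' (m : ℕ), ∑' (j : ℕ), (if m < j then μ' {ω | X v i ω = j} else 0) := by
          exact tsum_congr fun m => measure_tail hX v i m
      _ = ∑' (j : ℕ), ∑' (m : ℕ), (if m < j then μ' {ω | X v i ω = j} else 0) :=
          ENNReal.tsum_comm
      _ = ∑' j : ℕ, (j : ℝ≥0∞) * μ' {ω | X v i ω = j} :=
          tsum_congr fun j => tsum_ite_lt j _
  rw [h1]
  have hshift : ∑' j : ℕ, (j : ℝ≥0∞) * μ' {ω | X v i ω = j}
      = ∑' j : ℕ, ((j + 1 : ℕ) : ℝ≥0∞) * μ' {ω | X v i ω = j + 1} := by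
    rw [tsum_eq_zero_add' ENNReal.summable]
    simp
  rw [hshift]
  have hterm : ∀ j : ℕ, ((j + 1 : ℕ) : ℝ≥0∞) * μ' {ω | X v i ω = j + 1}
      = ENNReal.ofReal (lam i) * μ' {ω | X v i ω = j} := by
    intro j
    rw [hX.poisson, hX.poisson]
    rw [← ENNReal.ofReal_natCast (j + 1), ← ENNReal.ofReal_mul (by positivity),
      ← ENNReal.ofReal_mul (hpos i).le]
    congr 1
    have hfac : ((j + 1).factorial : ℝ) = (j + 1) * j.factorial := by
      rw [Nat.factorial_succ]; push_cast; ring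
    have hjf : (j.factorial : ℝ) ≠ 0 := Nat.cast_ne_zero.mpr j.factorial_ne_zero
    have hj1 : ((j : ℝ) + 1) ≠ 0 := by positivity
    rw [hfac]
    push_cast
    field_simp
    ring
  rw [tsum_congr hterm, ENNReal.tsum_mul_left, tsum_pmf_eq_one hX, mul_one]

open scoped Classical in
/-- Weight of a vertex: probability it is in the tree, restricted to level `n`
and colors in `I`. -/
noncomputable def W (μ' : Measure Ω') (X : Vtx k → Fin k → Ω' → ℕ)
    (I : Finset (Fin k)) (n : ℕ) (v : Vtx k) : ℝ≥0∞ :=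
  if v.length = n ∧ ∀ q ∈ v, q.1 ∈ I then μ' {ω | inTree (fun u i => X u i ω) v} else 0

lemma W_zero (hX : IsECBP μ' lam X) (I : Finset (Fin k)) :
    ∑' v : Vtx k, W μ' X I 0 v = 1 := by
  have := hX.isProb
  rw [tsum_eq_single ([] : Vtx k) (fun v hv => by
    have h : v.length ≠ 0 := fun h => hv (List.length_eq_zero_iff.mp h)
    simp [W, h])]
  have h1 : {ω | inTree (fun u i => X u i ω) ([] : Vtx k)} = Set.univ := by
    ext ω; simp [inTree]
  simp [W, h1]

lemma W_cons (hX : IsECBP μ' lam X) (I : Finset (Fin k)) (n : ℕ)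
    (q : Fin k × ℕ) (u : Vtx k) :
    W μ' X I (n + 1) (q :: u)
      = (if q.1 ∈ I then μ' {ω | q.2 < X u q.1 ω} else 0) * W μ' X I n u := by
  by_cases h1 : u.length = n ∧ ∀ r ∈ u, r.1 ∈ I
  · by_cases hi : q.1 ∈ I
    · have hc : ((q :: u).length = n + 1 ∧ ∀ r ∈ q :: u, r.1 ∈ I) := by
        refine ⟨by simp [h1.1], ?_⟩
        intro r hr
        rcases List.mem_cons.mp hr with h | h
        · rw [h]; exact hi
        · exact h1.2 r h
      simp only [W, if_pos hc, if_pos h1, if_pos hi]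
      rw [measure_inTree_cons hX q u, mul_comm]
    · have hc : ¬ ((q :: u).length = n + 1 ∧ ∀ r ∈ q :: u, r.1 ∈ I) := by
        rintro ⟨-, hall⟩; exact hi (hall q List.mem_cons_self)
      simp only [W, if_neg hc, if_neg hi, zero_mul]
  · have hc : ¬ ((q :: u).length = n + 1 ∧ ∀ r ∈ q :: u, r.1 ∈ I) := by
      rintro ⟨hl, hall⟩
      exact h1 ⟨by simpa using hl, fun r hr => hall r (List.mem_cons_of_mem _ hr)⟩
    simp only [W, if_neg hc, if_neg h1, mul_zero]

lemma W_succ (hX : IsECBP μ' lam X) (hpos : ∀ i, 0 < lam i)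
    (I : Finset (Fin k)) (n : ℕ) :
    ∑' v : Vtx k, W μ' X I (n + 1) v
      = (∑ i ∈ I, ENNReal.ofReal (lam i)) * ∑' v : Vtx k, W μ' X I n v := by
  classical
  have hinj : Function.Injective (fun p : Vtx k × (Fin k × ℕ) => p.2 :: p.1) := by
    rintro ⟨u, q⟩ ⟨u', q'⟩ h
    simp only [List.cons.injEq] at h
    exact Prod.ext h.2 h.1
  have hsupp : Function.support (W μ' X I (n + 1))
      ⊆ Set.range (fun p : Vtx k × (Fin k × ℕ) => p.2 :: p.1) := by
    intro v hv
    cases v with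
    | nil => exact absurd (by simp [W]) hv
    | cons q u => exact ⟨(u, q), rfl⟩
  rw [← hinj.tsum_eq hsupp,
    ENNReal.tsum_prod (f := fun (u : Vtx k) (q : Fin k × ℕ) => W μ' X I (n + 1) (q :: u))]
  have inner : ∀ u : Vtx k, (∑' q : Fin k × ℕ, W μ' X I (n + 1) (q :: u))
      = (∑ i ∈ I, ENNReal.ofReal (lam i)) * W μ' X I n u := by
    intro u
    rw [ENNReal.tsum_prod (f := fun (i : Fin k) (m : ℕ) => W μ' X I (n + 1) ((i, m) :: u))]
    have hm : ∀ i : Fin k, (∑' m : ℕ, W μ' X I (n + 1) ((i, m) :: u))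
        = (if i ∈ I then ENNReal.ofReal (lam i) else 0) * W μ' X I n u := by
      intro i
      rw [tsum_congr (fun m => W_cons hX I n (i, m) u)]
      by_cases hi : i ∈ I
      · simp only [hi, if_pos]
        rw [ENNReal.tsum_mul_right, tsum_tail hX hpos u i]
      · simp [hi]
    rw [tsum_congr hm, ENNReal.tsum_mul_right, tsum_fintype]
    congr 1
    rw [Finset.sum_ite_mem, Finset.univ_inter]
  rw [tsum_congr inner, ENNReal.tsum_mul_left]

lemma W_level (hX : IsECBP μ' lam X) (hpos : ∀ i, 0 < lam i)
    (I : Finset (Fin k)) : ∀ n : ℕ,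
    ∑' v : Vtx k, W μ' X I n v = (∑ i ∈ I, ENNReal.ofReal (lam i)) ^ n
  | 0 => by simpa using W_zero hX I
  | n + 1 => by
    rw [W_succ hX hpos I n, W_level hX hpos I n, pow_succ, mul_comm]


lemma measurableSet_inTree (hm : ∀ v i, Measurable (X v i)) :
    ∀ v : Vtx k, MeasurableSet {ω | inTree (fun u i => X u i ω) v}
  | [] => by simp [inTree]
  | q :: v => by
    have : {ω | inTree (fun u i => X u i ω) (q :: v)}
        = {ω | inTree (fun u i => X u i ω) v} ∩ {ω | q.2 < X v q.1 ω} := rfl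
    rw [this]
    exact (measurableSet_inTree hm v).inter ((hm v q.1) trivial)

open scoped Classical in
lemma W_total (hX : IsECBP μ' lam X) (hpos : ∀ i, 0 < lam i) (I : Finset (Fin k)) :
    (∑' v : Vtx k, if (∀ q ∈ v, q.1 ∈ I)
        then μ' {ω | inTree (fun u i => X u i ω) v} else 0)
      = ∑' n : ℕ, (∑ i ∈ I, ENNReal.ofReal (lam i)) ^ n := by
  have h1 : ∀ v : Vtx k, (if (∀ q ∈ v, q.1 ∈ I)
      then μ' {ω | inTree (fun u i => X u i ω) v} else 0) = ∑' n : ℕ, W μ' X I n v := by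
    intro v
    rw [tsum_eq_single v.length (fun n hn => by simp [W, Ne.symm hn])]
    simp [W]
  rw [tsum_congr h1, ENNReal.tsum_comm]
  exact tsum_congr (W_level hX hpos I)

lemma ae_finite_colors_in (hX : IsECBP μ' lam X) (hpos : ∀ i, 0 < lam i)
    (I : Finset (Fin k)) (hI : ∑ i ∈ I, lam i < 1) :
    ∀ᵐ ω ∂μ',
      {v : Vtx k | inTree (fun u i => X u i ω) v ∧ ∀ q ∈ v, q.1 ∈ I}.Finite := by
  classical
  have hΛ1 : (∑ i ∈ I, ENNReal.ofReal (lam i)) < 1 := by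
    rw [← ENNReal.ofReal_sum_of_nonneg (fun i _ => (hpos i).le)]
    exact ENNReal.ofReal_lt_one.mpr hI
  set A : Vtx k → Set Ω' :=
    fun v => {ω' | inTree (fun u i => X u i ω') v ∧ ∀ q ∈ v, q.1 ∈ I} with hA
  have hAcases : ∀ v : Vtx k, A v = if (∀ q ∈ v, q.1 ∈ I)
      then {ω' | inTree (fun u i => X u i ω') v} else ∅ := by
    intro v
    by_cases h : ∀ q ∈ v, q.1 ∈ I
    · rw [if_pos h]
      exact Set.ext fun ω => and_iff_left h
    · rw [if_neg h]
      exact Set.eq_empty_of_forall_notMem fun ω hw => h hw.2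
  have hAm : ∀ v : Vtx k, MeasurableSet (A v) := by
    intro v
    rw [hAcases v]
    by_cases h : ∀ q ∈ v, q.1 ∈ I
    · rw [if_pos h]; exact measurableSet_inTree hX.meas v
    · rw [if_neg h]; exact MeasurableSet.empty
  have hgint : ∀ v : Vtx k, ∫⁻ ω, Set.indicator (A v) (1 : Ω' → ℝ≥0∞) ω ∂μ'
      = if (∀ q ∈ v, q.1 ∈ I) then μ' {ω | inTree (fun u i => X u i ω) v} else 0 := by
    intro v
    rw [lintegral_indicator_one (hAm v), hAcases v]
    by_cases h : ∀ q ∈ v, q.1 ∈ I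
    · rw [if_pos h, if_pos h]
    · rw [if_neg h, if_neg h, measure_empty]
  have hGint : ∫⁻ ω, (∑' v : Vtx k, Set.indicator (A v) (1 : Ω' → ℝ≥0∞) ω) ∂μ'
      = (1 - ∑ i ∈ I, ENNReal.ofReal (lam i))⁻¹ := by
    rw [lintegral_tsum (f := fun v => (A v).indicator (1 : Ω' → ℝ≥0∞))
      (fun v => ((measurable_const.indicator (hAm v)).aemeasurable))]
    rw [tsum_congr hgint, W_total hX hpos I, ENNReal.tsum_geometric]
  have hne : (1 - ∑ i ∈ I, ENNReal.ofReal (lam i))⁻¹ ≠ ⊤ :=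
    ENNReal.inv_ne_top.mpr (tsub_pos_of_lt hΛ1).ne'
  have hae : ∀ᵐ ω ∂μ',
      (∑' v : Vtx k, Set.indicator (A v) (1 : Ω' → ℝ≥0∞) ω) < ⊤ :=
    ae_lt_top (Measurable.ennreal_tsum fun v => measurable_const.indicator (hAm v))
      (by rw [hGint]; exact hne)
  filter_upwards [hae] with ω hω
  by_contra hinf
  set S : Set (Vtx k) := {v : Vtx k | inTree (fun u i => X u i ω) v ∧ ∀ q ∈ v, q.1 ∈ I}
    with hS
  have h1 : ∀ v : Vtx k, Set.indicator (A v) (1 : Ω' → ℝ≥0∞) ω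
      = Set.indicator S (1 : Vtx k → ℝ≥0∞) v := by
    intro v
    by_cases h : inTree (fun u i => X u i ω) v ∧ ∀ q ∈ v, q.1 ∈ I
    · rw [Set.indicator_of_mem (a := ω) h, Set.indicator_of_mem (a := v) h]
      rfl
    · rw [Set.indicator_of_notMem (a := ω) h, Set.indicator_of_notMem (a := v) h]
  have hrepr : (∑' v : Vtx k, Set.indicator (A v) (1 : Ω' → ℝ≥0∞) ω)
      = ∑' x : ↥S, (1 : Vtx k → ℝ≥0∞) ↑x := by
    rw [tsum_congr h1, ← tsum_subtype S (1 : Vtx k → ℝ≥0∞)]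
  have hone : (∑' x : ↥S, (1 : Vtx k → ℝ≥0∞) ↑x) = ∑' _ : ↥S, (1 : ℝ≥0∞) :=
    tsum_congr fun x => rfl
  have hinfS : Infinite ↥S := Set.infinite_coe_iff.mpr hinf
  rw [hrepr, hone, ENNReal.tsum_const_eq_top_of_ne_zero one_ne_zero] at hω
  exact absurd hω (lt_irrefl _)

theorem reachable_with_few_colors_ae_finite'
    (hk : 2 ≤ k) (hpos : ∀ i, 0 < lam i)
    (hA : ∀ I : Finset (Fin k), I.card ≤ k - 2 → ∑ i ∈ I, lam i < 1)
    (hX : IsECBP μ' lam X) :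
    ∀ᵐ ω' ∂μ',
      {v : Vtx k | inTree (fun u i => X u i ω') v ∧
        (v.map Prod.fst).toFinset.card ≤ k - 2}.Finite := by
  classical
  have main : ∀ᵐ ω' ∂μ', ∀ I : Finset (Fin k), I.card ≤ k - 2 →
      {v : Vtx k | inTree (fun u i => X u i ω') v ∧ ∀ q ∈ v, q.1 ∈ I}.Finite := by
    rw [ae_all_iff]
    intro I
    by_cases hI : I.card ≤ k - 2
    · filter_upwards [ae_finite_colors_in hX hpos I (hA I hI)] with ω h _
      exact h
    · filter_upwards with ω h
      exact absurd h hI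
  filter_upwards [main] with ω hω
  have hsub : {v : Vtx k | inTree (fun u i => X u i ω) v ∧
        (v.map Prod.fst).toFinset.card ≤ k - 2}
      ⊆ ⋃ I ∈ {I : Finset (Fin k) | I.card ≤ k - 2},
        {v : Vtx k | inTree (fun u i => X u i ω) v ∧ ∀ q ∈ v, q.1 ∈ I} := by
    intro v hv
    refine Set.mem_biUnion (show (v.map Prod.fst).toFinset
      ∈ {I : Finset (Fin k) | I.card ≤ k - 2} from hv.2) ?_
    exact ⟨hv.1, fun q hq => List.mem_toFinset.mpr (List.mem_map_of_mem hq)⟩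
  refine Set.Finite.subset ?_ hsub
  exact Set.Finite.biUnion (Set.toFinite _) (fun I hI => hω I hI)


end AuxProof

/-- Under Assumption (A), in the edge-colored Poisson branching process
tree the set of vertices reachable from the root by paths using at most `k − 2` distinct
edge colors is almost surely finite (i.e. `ρ(r) < ∞` a.s.). -/
theorem reachable_with_few_colors_ae_finite
    {k : ℕ} (hk : 2 ≤ k) (lam : Fin k → ℝ) (hpos : ∀ i, 0 < lam i)
    (hA : ∀ I : Finset (Fin k), I.card ≤ k - 2 → ∑ i ∈ I, lam i < 1)
    {Ω' : Type*} [MeasurableSpace Ω'] (μ' : Measure Ω')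
    (X : Vtx k → Fin k → Ω' → ℕ) (hX : IsECBP μ' lam X) :
    ∀ᵐ ω' ∂μ',
      {v : Vtx k | inTree (fun u i => X u i ω') v ∧
        (v.map Prod.fst).toFinset.card ≤ k - 2}.Finite := by
  exact reachable_with_few_colors_ae_finite' hk hpos hA hX

end CAP
end

section
/- Let k ≥ 2 be an integer, n ∈ ℕ_+, d ∈ ℕ, h ∈ {0, 1, …, k−2}, λ̲ ∈ ℝ_+^k, G ~ 𝒢_n([n], λ̲) an edge-colored Erdős–Rényi multigraph, and v, w ∈ [n]. Then: (i) the conditional distribution of the edge-colored subgraph G'_d(v,w) given the explored graph G_d(v,w) is 𝒢_n([n] ∖ R^≤_{d−1}({v,w}, G), λ̲); and (ii) the conditional distribution of the edge-colored subgraph G̃'_h(v,w) given the sigma-algebra F_{v,w,h} is 𝒢_n([n] ∖ R̃^≤_h({v,w}, G), λ̲). -/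
open MeasureTheory ProbabilityTheory Filter

namespace CAP

/-- The uncolored graph of a colored edge configuration. -/
def ucGraph {k n : ℕ} (c : Fin k → Sym2 (Fin n) → Bool) : SimpleGraph (Fin n) where
  Adj x y := x ≠ y ∧ ∃ i : Fin k, c i s(x, y) = true
  symm := ⟨by
    rintro x y ⟨hxy, i, hc⟩
    exact ⟨hxy.symm, i, by rwa [Sym2.eq_swap] at hc⟩⟩
  loopless := ⟨fun x h => h.1 rfl⟩

/-- The graph using only edges whose color lies in `I`. -/
def colorGraph {k n : ℕ} (c : Fin k → Sym2 (Fin n) → Bool) (I : Finset (Fin k)) :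
    SimpleGraph (Fin n) where
  Adj x y := x ≠ y ∧ ∃ i ∈ I, c i s(x, y) = true
  symm := ⟨by
    rintro x y ⟨hxy, i, hi, hc⟩
    exact ⟨hxy.symm, i, hi, by rwa [Sym2.eq_swap] at hc⟩⟩
  loopless := ⟨fun x h => h.1 rfl⟩

/-- `R^≤_{d−1}(W)`: the set of vertices at (uncolored) graph distance `< d` from `W`. -/
def ballLT {k n : ℕ} (c : Fin k → Sym2 (Fin n) → Bool) (W : Set (Fin n)) (d : ℕ) :
    Set (Fin n) :=
  {u | ∃ w ∈ W, ∃ p : (ucGraph c).Walk w u, p.length < d}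

/-- `R̃^≤_h(W)`: the set of vertices reachable from `W` by a path using at most `h`
distinct edge colors. -/
def colorBall {k n : ℕ} (c : Fin k → Sym2 (Fin n) → Bool) (W : Set (Fin n)) (h : ℕ) :
    Set (Fin n) :=
  {u | ∃ w ∈ W, ∃ I : Finset (Fin k), I.card ≤ h ∧ (colorGraph c I).Reachable w u}

section Aux

variable {k n : ℕ}

lemma ucGraph_adj {c : Fin k → Sym2 (Fin n) → Bool} {x y : Fin n} :
    (ucGraph c).Adj x y ↔ x ≠ y ∧ ∃ i : Fin k, c i s(x, y) = true := Iff.rfl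

lemma colorGraph_adj {c : Fin k → Sym2 (Fin n) → Bool} {I : Finset (Fin k)} {x y : Fin n} :
    (colorGraph c I).Adj x y ↔ x ≠ y ∧ ∃ i ∈ I, c i s(x, y) = true := Iff.rfl

/-- Transfer of short walks from `c` to `c'` when they agree on edges meeting
`S = ballLT c W d`. -/
lemma walk_transfer {c c' : Fin k → Sym2 (Fin n) → Bool} {W : Set (Fin n)} {d : ℕ}
    {S : Set (Fin n)}
    (hag : ∀ i e, (∃ x ∈ e, x ∈ S) → c i e = c' i e)
    (hS : ballLT c W d = S)
    {w0 : Fin n} (hw0 : w0 ∈ W) :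
    ∀ (m : ℕ) {u : Fin n} (p : (ucGraph c).Walk w0 u), p.length ≤ m →
      p.length < d → ∃ p' : (ucGraph c').Walk w0 u, p'.length ≤ p.length := by
  intro m
  induction m with
  | zero =>
    intro u p hm _
    cases p with
    | nil => exact ⟨SimpleGraph.Walk.nil, le_refl _⟩
    | cons h q => simp at hm
  | succ m ih =>
    intro u p hm hd
    cases p with
    | nil => exact ⟨SimpleGraph.Walk.nil, le_refl _⟩
    | cons h q =>
      obtain ⟨x, r, h', heq⟩ := SimpleGraph.Walk.exists_cons_eq_concat h q
      have hlen : (SimpleGraph.Walk.cons h q).length = r.length + 1 := by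
        rw [heq, SimpleGraph.Walk.length_concat]
      rw [hlen] at hm hd ⊢
      obtain ⟨r', hr'⟩ := ih r (by omega) (by omega)
      have hx : x ∈ S := by rw [← hS]; exact ⟨w0, hw0, r, by omega⟩
      obtain ⟨hne, i, hi⟩ := ucGraph_adj.mp h'
      refine ⟨r'.concat (ucGraph_adj.mpr ⟨hne, i, ?_⟩), ?_⟩
      · rw [← hag i _ ⟨x, Sym2.mem_mk_left _ _, hx⟩]; exact hi
      · rw [SimpleGraph.Walk.length_concat]; omega

/-- Transfer of short walks from `c'` to `c` when they agree on edges meeting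
`S = ballLT c W d`. -/
lemma walk_transfer' {c c' : Fin k → Sym2 (Fin n) → Bool} {W : Set (Fin n)} {d : ℕ}
    {S : Set (Fin n)}
    (hag : ∀ i e, (∃ x ∈ e, x ∈ S) → c i e = c' i e)
    (hS : ballLT c W d = S)
    {w0 : Fin n} (hw0 : w0 ∈ W) :
    ∀ (m : ℕ) {u : Fin n} (p : (ucGraph c').Walk w0 u), p.length ≤ m →
      p.length < d → ∃ p' : (ucGraph c).Walk w0 u, p'.length ≤ p.length := by
  intro m
  induction m with
  | zero =>
    intro u p hm _
    cases p with
    | nil => exact ⟨SimpleGraph.Walk.nil, le_refl _⟩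
    | cons h q => simp at hm
  | succ m ih =>
    intro u p hm hd
    cases p with
    | nil => exact ⟨SimpleGraph.Walk.nil, le_refl _⟩
    | cons h q =>
      obtain ⟨x, r, h', heq⟩ := SimpleGraph.Walk.exists_cons_eq_concat h q
      have hlen : (SimpleGraph.Walk.cons h q).length = r.length + 1 := by
        rw [heq, SimpleGraph.Walk.length_concat]
      rw [hlen] at hm hd ⊢
      obtain ⟨r', hr'⟩ := ih r (by omega) (by omega)
      have hx : x ∈ S := by rw [← hS]; exact ⟨w0, hw0, r', by omega⟩
      obtain ⟨hne, i, hi⟩ := ucGraph_adj.mp h'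
      refine ⟨r'.concat (ucGraph_adj.mpr ⟨hne, i, ?_⟩), ?_⟩
      · rw [hag i _ ⟨x, Sym2.mem_mk_left _ _, hx⟩]; exact hi
      · rw [SimpleGraph.Walk.length_concat]; omega

lemma ballLT_agree {c c' : Fin k → Sym2 (Fin n) → Bool} {W : Set (Fin n)} {d : ℕ}
    {S : Set (Fin n)}
    (hag : ∀ i e, (∃ x ∈ e, x ∈ S) → c i e = c' i e)
    (hS : ballLT c W d = S) : ballLT c' W d = S := by
  ext u
  constructor
  · rintro ⟨w0, hw0, p, hp⟩
    obtain ⟨p', hp'⟩ := walk_transfer' hag hS hw0 p.length p (le_refl _) hp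
    rw [← hS]; exact ⟨w0, hw0, p', by omega⟩
  · intro hu
    rw [← hS] at hu
    obtain ⟨w0, hw0, p, hp⟩ := hu
    obtain ⟨p', hp'⟩ := walk_transfer hag hS hw0 p.length p (le_refl _) hp
    exact ⟨w0, hw0, p', by omega⟩

lemma reach_transfer {c c' : Fin k → Sym2 (Fin n) → Bool} {W : Set (Fin n)} {h : ℕ}
    {S : Set (Fin n)}
    (hag : ∀ i e, (∃ x ∈ e, x ∈ S) → c i e = c' i e)
    (hS : colorBall c W h = S)
    {w0 : Fin n} (hw0 : w0 ∈ W) {I : Finset (Fin k)} (hI : I.card ≤ h) :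
    ∀ (m : ℕ) {u : Fin n} (p : (colorGraph c I).Walk w0 u), p.length ≤ m →
      (colorGraph c' I).Reachable w0 u := by
  intro m
  induction m with
  | zero =>
    intro u p hm
    cases p with
    | nil => exact SimpleGraph.Reachable.refl _
    | cons h q => simp at hm
  | succ m ih =>
    intro u p hm
    cases p with
    | nil => exact SimpleGraph.Reachable.refl _
    | cons h' q =>
      obtain ⟨x, r, h'', heq⟩ := SimpleGraph.Walk.exists_cons_eq_concat h' q
      have hlen : (SimpleGraph.Walk.cons h' q).length = r.length + 1 := by
        rw [heq, SimpleGraph.Walk.length_concat]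
      rw [hlen] at hm
      have hreach := ih r (by omega)
      have hx : x ∈ S := by rw [← hS]; exact ⟨w0, hw0, I, hI, ⟨r⟩⟩
      obtain ⟨hne, i, hiI, hi⟩ := colorGraph_adj.mp h''
      refine hreach.trans (SimpleGraph.Adj.reachable (colorGraph_adj.mpr ⟨hne, i, hiI, ?_⟩))
      rw [← hag i _ ⟨x, Sym2.mem_mk_left _ _, hx⟩]; exact hi

lemma reach_transfer' {c c' : Fin k → Sym2 (Fin n) → Bool} {W : Set (Fin n)} {h : ℕ}
    {S : Set (Fin n)}
    (hag : ∀ i e, (∃ x ∈ e, x ∈ S) → c i e = c' i e)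
    (hS : colorBall c W h = S)
    {w0 : Fin n} (hw0 : w0 ∈ W) {I : Finset (Fin k)} (hI : I.card ≤ h) :
    ∀ (m : ℕ) {u : Fin n} (p : (colorGraph c' I).Walk w0 u), p.length ≤ m →
      (colorGraph c I).Reachable w0 u := by
  intro m
  induction m with
  | zero =>
    intro u p hm
    cases p with
    | nil => exact SimpleGraph.Reachable.refl _
    | cons h q => simp at hm
  | succ m ih =>
    intro u p hm
    cases p with
    | nil => exact SimpleGraph.Reachable.refl _
    | cons h' q =>
      obtain ⟨x, r, h'', heq⟩ := SimpleGraph.Walk.exists_cons_eq_concat h' q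
      have hlen : (SimpleGraph.Walk.cons h' q).length = r.length + 1 := by
        rw [heq, SimpleGraph.Walk.length_concat]
      rw [hlen] at hm
      have hreach := ih r (by omega)
      have hx : x ∈ S := by rw [← hS]; exact ⟨w0, hw0, I, hI, hreach⟩
      obtain ⟨hne, i, hiI, hi⟩ := colorGraph_adj.mp h''
      refine hreach.trans (SimpleGraph.Adj.reachable (colorGraph_adj.mpr ⟨hne, i, hiI, ?_⟩))
      rw [hag i _ ⟨x, Sym2.mem_mk_left _ _, hx⟩]; exact hi

lemma colorBall_agree {c c' : Fin k → Sym2 (Fin n) → Bool} {W : Set (Fin n)} {h : ℕ}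
    {S : Set (Fin n)}
    (hag : ∀ i e, (∃ x ∈ e, x ∈ S) → c i e = c' i e)
    (hS : colorBall c W h = S) : colorBall c' W h = S := by
  ext u
  constructor
  · rintro ⟨w0, hw0, I, hI, hr⟩
    obtain ⟨p⟩ := hr
    rw [← hS]; exact ⟨w0, hw0, I, hI, reach_transfer' hag hS hw0 hI p.length p (le_refl _)⟩
  · intro hu
    rw [← hS] at hu
    obtain ⟨w0, hw0, I, hI, hr⟩ := hu
    obtain ⟨p⟩ := hr
    exact ⟨w0, hw0, I, hI, reach_transfer hag hS hw0 hI p.length p (le_refl _)⟩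

/-- Conditioning an independent family of Bool-valued random variables on a cylinder event
(fixing the values on `t`) leaves the joint law of any finite set of coordinates outside `t`
unchanged. -/
lemma key_cond {Ω : Type*} [MeasurableSpace Ω] {μ : Measure Ω}
    [IsProbabilityMeasure μ] {ι : Type*} {f : ι → Ω → Bool}
    (hmeas : ∀ i, Measurable (f i))
    (hindep : iIndepFun f μ)
    (t : Finset ι) (η : ι → Bool)
    (hM0 : μ (⋂ q ∈ t, f q ⁻¹' {η q}) ≠ 0)
    (s : Finset ι) (hst : Disjoint s t) (sets : ι → Set Bool) :
    (μ[| ⋂ q ∈ t, f q ⁻¹' {η q}]) (⋂ q ∈ s, f q ⁻¹' sets q)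
      = ∏ q ∈ s, μ (f q ⁻¹' sets q) := by
  classical
  set M := ⋂ q ∈ t, f q ⁻¹' {η q} with hMdef
  have hMmeas : MeasurableSet M :=
    Finset.measurableSet_biInter t fun q _ => (hmeas q) .of_discrete
  have hprod : ∀ (u : Finset ι) (C : ι → Set Bool),
      μ (⋂ q ∈ u, f q ⁻¹' C q) = ∏ q ∈ u, μ (f q ⁻¹' C q) := fun u C =>
    hindep.measure_inter_preimage_eq_mul u (fun i _ => .of_discrete)
  set C : ι → Set Bool := fun q => if q ∈ t then {η q} else sets q with hC
  have hMC : M = ⋂ q ∈ t, f q ⁻¹' C q := by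
    rw [hMdef]
    exact Set.iInter₂_congr fun q hq => by rw [hC]; simp [hq]
  have hBC : (⋂ q ∈ s, f q ⁻¹' sets q) = ⋂ q ∈ s, f q ⁻¹' C q :=
    Set.iInter₂_congr fun q hq => by
      rw [hC]; simp [Finset.disjoint_left.mp hst hq]
  rw [cond_apply hMmeas]
  have hunion : M ∩ (⋂ q ∈ s, f q ⁻¹' sets q) = ⋂ q ∈ (t ∪ s), f q ⁻¹' C q := by
    rw [hMC, hBC]
    ext ω
    simp only [Set.mem_inter_iff, Set.mem_iInter, Finset.mem_union]
    constructor
    · rintro ⟨h1, h2⟩ q hq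
      rcases hq with hq | hq
      exacts [h1 q hq, h2 q hq]
    · intro hω
      exact ⟨fun q hq => hω q (Or.inl hq), fun q hq => hω q (Or.inr hq)⟩
  rw [hunion, hprod _ C, Finset.prod_union hst.symm]
  have h1 : ∏ q ∈ t, μ (f q ⁻¹' C q) = μ M := (hMC ▸ hprod t C).symm
  have h2 : ∏ q ∈ s, μ (f q ⁻¹' C q) = ∏ q ∈ s, μ (f q ⁻¹' sets q) :=
    Finset.prod_congr rfl fun q hq => by
      rw [hC]; simp [Finset.disjoint_left.mp hst hq]
  rw [h1, h2, ← mul_assoc, ENNReal.inv_mul_cancel hM0 (measure_ne_top μ M), one_mul]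

/-- The common core of both parts of Statement 16: conditioning on the values of all colored
edges meeting `S`, the remaining colored edges are independent with unchanged probabilities. -/
lemma cond_of_cylinder {k n : ℕ} {Ω : Type*} [MeasurableSpace Ω] {μ : Measure Ω}
    {lam : Fin k → ℝ} {E : Fin k → Sym2 (Fin n) → Ω → Bool} (hE : IsECER μ n lam E)
    (S : Set (Fin n)) (η : Fin k → Sym2 (Fin n) → Bool)
    (hA0 : μ {ω | ∀ (i : Fin k) (e : Sym2 (Fin n)), (∃ x ∈ e, x ∈ S) → E i e ω = η i e} ≠ 0) :
    iIndepFun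
      (fun (q : {q : Fin k × Sym2 (Fin n) // ∀ x ∈ q.2, x ∉ S}) ω => E q.1.1 q.1.2 ω)
      (ProbabilityTheory.cond μ
        {ω | ∀ (i : Fin k) (e : Sym2 (Fin n)), (∃ x ∈ e, x ∈ S) → E i e ω = η i e}) ∧
    ∀ (i : Fin k) (e : Sym2 (Fin n)), ¬ e.IsDiag → (∀ x ∈ e, x ∉ S) →
      (ProbabilityTheory.cond μ
        {ω | ∀ (i : Fin k) (e : Sym2 (Fin n)), (∃ x ∈ e, x ∈ S) → E i e ω = η i e})
        {ω | E i e ω = true}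
        = ENNReal.ofReal (1 - Real.exp (-(lam i) / n)) := by
  classical
  haveI : IsProbabilityMeasure μ := hE.isProb
  set ι := Fin k × Sym2 (Fin n)
  set f : ι → Ω → Bool := fun q ω => E q.1 q.2 ω with hf
  have hmeas : ∀ q : ι, Measurable (f q) := fun q => hE.meas q.1 q.2
  have hindep : iIndepFun f μ := hE.indep
  set Q : ι → Prop := fun q => ∀ x ∈ q.2, x ∉ S with hQ
  set t : Finset ι := Finset.univ.filter (fun q => ¬ Q q) with ht
  set η' : ι → Bool := fun q => η q.1 q.2 with hη'
  have hQiff : ∀ q : ι, (∃ x ∈ q.2, x ∈ S) ↔ ¬ Q q := by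
    intro q
    constructor
    · rintro ⟨x, hx, hxS⟩ hall
      exact hall x hx hxS
    · intro hn
      by_contra hno
      push_neg at hno
      exact hn hno
  have hAeq : {ω | ∀ (i : Fin k) (e : Sym2 (Fin n)), (∃ x ∈ e, x ∈ S) → E i e ω = η i e}
      = ⋂ q ∈ t, f q ⁻¹' {η' q} := by
    ext ω
    simp only [Set.mem_setOf_eq, Set.mem_iInter, Set.mem_preimage, Set.mem_singleton_iff,
      ht, Finset.mem_filter, Finset.mem_univ, true_and]
    constructor
    · intro hω q hq
      exact hω q.1 q.2 ((hQiff q).mpr hq)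
    · intro hω i e he
      exact hω (i, e) ((hQiff (i, e)).mp he)
  rw [hAeq] at hA0 ⊢
  have hkey := key_cond hmeas hindep t η' hA0
  constructor
  · rw [iIndepFun_iff_measure_inter_preimage_eq_mul]
    intro S' sets _
    set sets' : ι → Set Bool := fun i => if h : Q i then sets ⟨i, h⟩ else Set.univ with hsets'
    set s : Finset ι := S'.image Subtype.val with hs
    have hdisj : Disjoint s t := by
      rw [Finset.disjoint_left]
      rintro q hq hqt
      rw [hs, Finset.mem_image] at hq
      obtain ⟨q', _, rfl⟩ := hq
      rw [ht, Finset.mem_filter] at hqt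
      exact hqt.2 q'.2
    have hinter : (⋂ q ∈ S', (fun ω => f q.1 ω) ⁻¹' sets q) = ⋂ i ∈ s, f i ⁻¹' sets' i := by
      ext ω
      simp only [Set.mem_iInter, Set.mem_preimage, hs, Finset.mem_image]
      constructor
      · rintro hω i ⟨q, hq, rfl⟩
        have := hω q hq
        rw [hsets']
        simpa [dif_pos q.2] using this
      · intro hω q hq
        have := hω q.1 ⟨q, hq, rfl⟩
        rw [hsets'] at this
        simpa [dif_pos q.2] using this
    rw [hinter, hkey s hdisj sets']
    have hsingle : ∀ q : {q : ι // Q q},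
        (μ[| ⋂ q ∈ t, f q ⁻¹' {η' q}]) ((fun ω => f q.1 ω) ⁻¹' sets q)
          = μ (f q.1 ⁻¹' sets' q.1) := by
      intro q
      have hd : Disjoint ({q.1} : Finset ι) t := by
        rw [Finset.disjoint_left]
        rintro x hx hxt
        rw [Finset.mem_singleton] at hx
        subst hx
        rw [ht, Finset.mem_filter] at hxt
        exact hxt.2 q.2
      have hres := hkey {q.1} hd sets'
      simp only [Finset.prod_singleton, Finset.set_biInter_singleton] at hres
      have he : sets' q.1 = sets q := by rw [hsets']; exact dif_pos q.2
      rw [he] at hres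
      exact he ▸ hres
    rw [Finset.prod_congr rfl fun q hq => hsingle q]
    rw [hs, Finset.prod_image fun x _ y _ h => Subtype.ext h]
  · intro i e hdiag hQe
    have hd : Disjoint ({(i, e)} : Finset ι) t := by
      rw [Finset.disjoint_left]
      rintro x hx hxt
      rw [Finset.mem_singleton] at hx
      subst hx
      rw [ht, Finset.mem_filter] at hxt
      exact hxt.2 hQe
    have hres := hkey {(i, e)} hd (fun _ => {true})
    simp only [Finset.prod_singleton, Finset.set_biInter_singleton] at hres
    have hpr : μ (f (i, e) ⁻¹' {true}) = ENNReal.ofReal (1 - Real.exp (-(lam i) / n)) :=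
      hE.prob i e hdiag
    have heq : {ω | E i e ω = true} = f (i, e) ⁻¹' {true} := rfl
    rw [heq, hres, hpr]

lemma cond_of_ball {k n : ℕ} {Ω : Type*} [MeasurableSpace Ω] {μ : Measure Ω}
    {lam : Fin k → ℝ} {E : Fin k → Sym2 (Fin n) → Ω → Bool} (hE : IsECER μ n lam E)
    (S : Set (Fin n)) (η : Fin k → Sym2 (Fin n) → Bool)
    (Ball : (Fin k → Sym2 (Fin n) → Bool) → Set (Fin n))
    (hBall : ∀ c c' : Fin k → Sym2 (Fin n) → Bool,
      (∀ i e, (∃ x ∈ e, x ∈ S) → c i e = c' i e) → Ball c = S → Ball c' = S) :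
    μ {ω | Ball (fun i e => E i e ω) = S ∧
        ∀ (i : Fin k) (e : Sym2 (Fin n)), (∃ x ∈ e, x ∈ S) → E i e ω = η i e} ≠ 0 →
      iIndepFun
        (fun (q : {q : Fin k × Sym2 (Fin n) // ∀ x ∈ q.2, x ∉ S}) ω => E q.1.1 q.1.2 ω)
        (ProbabilityTheory.cond μ {ω | Ball (fun i e => E i e ω) = S ∧
          ∀ (i : Fin k) (e : Sym2 (Fin n)), (∃ x ∈ e, x ∈ S) → E i e ω = η i e}) ∧
      ∀ (i : Fin k) (e : Sym2 (Fin n)), ¬ e.IsDiag → (∀ x ∈ e, x ∉ S) →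
        (ProbabilityTheory.cond μ {ω | Ball (fun i e => E i e ω) = S ∧
          ∀ (i : Fin k) (e : Sym2 (Fin n)), (∃ x ∈ e, x ∈ S) → E i e ω = η i e})
          {ω | E i e ω = true} = ENNReal.ofReal (1 - Real.exp (-(lam i) / n)) := by
  classical
  intro hA0
  set c0 : Fin k → Sym2 (Fin n) → Bool :=
    fun i e => if (∃ x ∈ e, x ∈ S) then η i e else false with hc0
  by_cases hb : Ball c0 = S
  · have hAeq : {ω | Ball (fun i e => E i e ω) = S ∧
        ∀ (i : Fin k) (e : Sym2 (Fin n)), (∃ x ∈ e, x ∈ S) → E i e ω = η i e}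
        = {ω | ∀ (i : Fin k) (e : Sym2 (Fin n)), (∃ x ∈ e, x ∈ S) → E i e ω = η i e} := by
      ext ω
      simp only [Set.mem_setOf_eq]
      constructor
      · exact fun hω => hω.2
      · intro hm
        refine ⟨hBall c0 _ (fun i e he => ?_) hb, hm⟩
        rw [hc0]
        simp only [if_pos he]
        exact (hm i e he).symm
    rw [hAeq] at hA0 ⊢
    exact cond_of_cylinder hE S η hA0
  · exfalso
    apply hA0
    have hempty : {ω | Ball (fun i e => E i e ω) = S ∧
        ∀ (i : Fin k) (e : Sym2 (Fin n)), (∃ x ∈ e, x ∈ S) → E i e ω = η i e} = ∅ := by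
      ext ω
      simp only [Set.mem_setOf_eq, Set.mem_empty_iff_false, iff_false, not_and]
      intro hball hm
      refine hb (hBall _ c0 (fun i e he => ?_) hball)
      rw [hc0]
      simp only [if_pos he]
      exact hm i e he
    rw [hempty, measure_empty]

end Aux

/-- (The unexplored graph is ECER.) Let `G ~ 𝒢_n([n], λ)` and `v, w ∈ [n]`.
(i) Conditionally on the explored graph `G_d(v,w)` (that is, on the set
`S = R^≤_{d−1}({v,w})` together with the states of all colored edges meeting `S`), the colored
edges of `G'_d(v,w) = G − R^≤_{d−1}({v,w})` are distributed as `𝒢_n([n] ∖ S, λ̲)`: the edge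
indicators with both endpoints outside `S` are independent, an edge of color `i` being present
with probability `1 − exp(−λ_i/n)`.
(ii) The same holds conditionally on `F_{v,w,h}`, i.e. with `S = R̃^≤_h({v,w})` the
`≤ h`-color exploration, for the unexplored graph `G̃'_h(v,w)`. -/
theorem unexplored_graph_is_ECER
    {k : ℕ} (hk : 2 ≤ k) (lam : Fin k → ℝ) (hpos : ∀ i, 0 < lam i)
    {Ω : Type*} [MeasurableSpace Ω] (μ : Measure Ω) (n : ℕ) (hn : 1 ≤ n)
    (E : Fin k → Sym2 (Fin n) → Ω → Bool) (hE : IsECER μ n lam E)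
    (v w : Fin n) (d : ℕ) (h : ℕ) (hh : h ≤ k - 2) :
    (∀ (S : Set (Fin n)) (η : Fin k → Sym2 (Fin n) → Bool),
      (fun A : Set Ω =>
        μ A ≠ 0 →
          iIndepFun
            (fun (q : {q : Fin k × Sym2 (Fin n) // ∀ x ∈ q.2, x ∉ S}) ω => E q.1.1 q.1.2 ω) (ProbabilityTheory.cond μ A) ∧
          ∀ (i : Fin k) (e : Sym2 (Fin n)), ¬ e.IsDiag → (∀ x ∈ e, x ∉ S) →
            (ProbabilityTheory.cond μ A) {ω | E i e ω = true}
              = ENNReal.ofReal (1 - Real.exp (-(lam i) / n)))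
      {ω | ballLT (fun i e => E i e ω) {v, w} d = S ∧
        ∀ (i : Fin k) (e : Sym2 (Fin n)), (∃ x ∈ e, x ∈ S) → E i e ω = η i e}) ∧
    (∀ (S : Set (Fin n)) (η : Fin k → Sym2 (Fin n) → Bool),
      (fun A : Set Ω =>
        μ A ≠ 0 →
          iIndepFun
            (fun (q : {q : Fin k × Sym2 (Fin n) // ∀ x ∈ q.2, x ∉ S}) ω => E q.1.1 q.1.2 ω) (ProbabilityTheory.cond μ A) ∧
          ∀ (i : Fin k) (e : Sym2 (Fin n)), ¬ e.IsDiag → (∀ x ∈ e, x ∉ S) →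
            (ProbabilityTheory.cond μ A) {ω | E i e ω = true}
              = ENNReal.ofReal (1 - Real.exp (-(lam i) / n)))
      {ω | colorBall (fun i e => E i e ω) {v, w} h = S ∧
        ∀ (i : Fin k) (e : Sym2 (Fin n)), (∃ x ∈ e, x ∈ S) → E i e ω = η i e}) := by
  constructor
  · intro S η
    exact cond_of_ball hE S η (fun c => ballLT c {v, w} d)
      (fun c c' hag hS => ballLT_agree hag hS)
  · intro S η
    exact cond_of_ball hE S η (fun c => colorBall c {v, w} h)
      (fun c c' hag hS => colorBall_agree hag hS)

end CAP
end
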